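/- HLP_∅ is sound and complete with respect to the class of all HLP_∅ algebras with singleton set of distinguished elements {1}: a formula φ is a theorem of HLP_∅ if and only if under every valuation into every HLP_∅ algebra, the value of φ equals 1. -/

import Mathlib

/-- Proof terms of the logic of proofs LP. -/
inductive Tm : Type where
  | var : ℕ → Tm
  | const : ℕ → Tm
  | app : Tm → Tm → Tm
  | sum : Tm → Tm → Tm
  | bang : Tm → Tm

/-- Formulas of LP. -/
inductive Fm : Type where
  | prop : ℕ → Fm
  | bot : Fm
  | neg : Fm → Fm
  | or : Fm → Fm → Fm
  | box : Tm → Fm → Fm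

def Fm.imp (φ ψ : Fm) : Fm := .or (.neg φ) ψ
def Fm.and (φ ψ : Fm) : Fm := .neg (.or (.neg φ) (.neg ψ))
def Fm.iff (φ ψ : Fm) : Fm := (φ.imp ψ).and (ψ.imp φ)
def Fm.top : Fm := .neg .bot

/-- Axioms of LP: the propositional axioms PL1–PL5 plus Appl, Sum, jT, j4. -/
inductive LPAxiom : Fm → Prop where
  | pl1 (φ ψ : Fm) : LPAxiom (φ.imp (.or φ ψ))
  | pl2 (φ ψ : Fm) : LPAxiom ((Fm.or φ ψ).imp (.or ψ φ))
  | pl3 (φ : Fm) : LPAxiom ((Fm.or φ φ).imp φ)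
  | pl4 (φ ψ χ : Fm) : LPAxiom ((φ.imp ψ).imp ((Fm.or χ φ).imp (.or χ ψ)))
  | pl5 (φ : Fm) : LPAxiom (Fm.bot.imp φ)
  | appl (s t : Tm) (φ ψ : Fm) :
      LPAxiom ((Fm.box s (φ.imp ψ)).imp ((Fm.box t φ).imp (.box (.app s t) ψ)))
  | sum (s t : Tm) (φ : Fm) : LPAxiom (((Fm.box s φ).or (.box t φ)).imp (.box (.sum s t) φ))
  | jT (t : Tm) (φ : Fm) : LPAxiom ((Fm.box t φ).imp φ)
  | j4 (t : Tm) (φ : Fm) : LPAxiom ((Fm.box t φ).imp (.box (.bang t) (.box t φ)))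

/-- A constant specification: a set of pairs (c, φ) representing formulas c:φ. -/
abbrev ConstSpec := Set (ℕ × Fm)

/-- CS is a genuine constant specification: it only justifies axiom instances. -/
def ConstSpec.IsCS (CS : ConstSpec) : Prop := ∀ p ∈ CS, LPAxiom p.2

/-- CS is axiomatically appropriate: every axiom instance is justified by some constant. -/
def ConstSpec.AxApp (CS : ConstSpec) : Prop := ∀ φ, LPAxiom φ → ∃ c, (c, φ) ∈ CS

/-- Derivability in LP_CS from a set Γ of hypotheses; the only rule is modus ponens. -/
inductive Deriv (CS : ConstSpec) (Γ : Set Fm) : Fm → Prop where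
  | ax {φ} : LPAxiom φ → Deriv CS Γ φ
  | cs {c φ} : (c, φ) ∈ CS → Deriv CS Γ (.box (.const c) φ)
  | hyp {φ} : φ ∈ Γ → Deriv CS Γ φ
  | mp {φ ψ} : Deriv CS Γ (φ.imp ψ) → Deriv CS Γ φ → Deriv CS Γ ψ

/-- HLP_∅: LP with empty constant specification extended by the justification
regularity rule JReg. -/
inductive HDeriv : Fm → Prop where
  | ax {φ} : LPAxiom φ → HDeriv φ
  | mp {φ ψ} : HDeriv (φ.imp ψ) → HDeriv φ → HDeriv ψ
  | jreg {φ ψ} (t : Tm) : HDeriv (φ.iff ψ) → HDeriv ((Fm.box t φ).iff (Fm.box t ψ))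

/-- Extension of a valuation θ to all formulas, given operators □_t : A → A. -/
def evalBox {A : Type*} [BooleanAlgebra A] (box : Tm → A → A) (θ : ℕ → A) : Fm → A
  | .prop p => θ p
  | .bot => ⊥
  | .neg φ => (evalBox box θ φ)ᶜ
  | .or φ ψ => evalBox box θ φ ⊔ evalBox box θ ψ
  | .box t φ => box t (evalBox box θ φ)

/-- The conditions for a family of operators □_t : A → A on a Boolean algebra to
form an HLP_∅ algebra. -/
structure IsHLPAlg {A : Type*} [BooleanAlgebra A] (box : Tm → A → A) : Prop where
  appl : ∀ (s t : Tm) (a b : A), box s (a ⇨ b) ⊓ box t a ≤ box (.app s t) b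
  sum : ∀ (s t : Tm) (a : A), box s a ⊔ box t a ≤ box (.sum s t) a
  jT : ∀ (t : Tm) (a : A), box t a ≤ a
  j4 : ∀ (t : Tm) (a : A), box t a ≤ box (.bang t) (box t a)

/-- The given Boolean algebra structure and operators on the quotient `Quot r` are
induced by the logical connectives (i.e. the Tarski-Lindenbaum construction is
well defined) and form an HLP_∅ algebra. -/
def InducedHLP (r : Fm → Fm → Prop) (ba : BooleanAlgebra (Quot r))
    (box : Tm → Quot r → Quot r) : Prop :=
  letI := ba
  IsHLPAlg box ∧
  ((⊥ : Quot r) = Quot.mk r Fm.bot) ∧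
  (∀ φ, (Quot.mk r φ)ᶜ = Quot.mk r (Fm.neg φ)) ∧
  (∀ φ ψ, Quot.mk r φ ⊔ Quot.mk r ψ = Quot.mk r (Fm.or φ ψ)) ∧
  (∀ t φ, box t (Quot.mk r φ) = Quot.mk r (Fm.box t φ))

/-- Validity in the class of all HLP_∅ algebras with singleton ∇ = {1}. -/
def HLPValid (φ : Fm) : Prop :=
  ∀ (A : Type) [BooleanAlgebra A] (box : Tm → A → A),
    IsHLPAlg box → ∀ θ : ℕ → A, evalBox box θ φ = ⊤

namespace HLP

/-! ### Hilbert-style propositional toolkit in `Deriv ∅ Γ` -/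

abbrev D (Γ : Set Fm) (φ : Fm) : Prop := Deriv ∅ Γ φ

namespace D

variable {Γ : Set Fm} {φ ψ χ α β : Fm}

lemma ax' (h : LPAxiom φ) : D Γ φ := Deriv.ax h

lemma mp' (h1 : D Γ (φ.imp ψ)) (h2 : D Γ φ) : D Γ ψ := Deriv.mp h1 h2

/-- `B` as a rule: syllogism. -/
lemma syl (h1 : D Γ (φ.imp ψ)) (h2 : D Γ (ψ.imp χ)) : D Γ (φ.imp χ) :=
  mp' (mp' (ax' (LPAxiom.pl4 ψ χ (Fm.neg φ))) h2) h1

lemma id' : D Γ (φ.imp φ) := syl (ax' (LPAxiom.pl1 φ φ)) (ax' (LPAxiom.pl3 φ))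

lemma K : D Γ (φ.imp (ψ.imp φ)) :=
  syl (ax' (LPAxiom.pl1 φ (Fm.neg ψ))) (ax' (LPAxiom.pl2 φ (Fm.neg ψ)))

lemma perm (h : D Γ (Fm.or φ ψ)) : D Γ (Fm.or ψ φ) := mp' (ax' (LPAxiom.pl2 φ ψ)) h

/-- from ⊢ψ→χ infer ⊢φ∨ψ→φ∨χ -/
lemma orMonoR (h : D Γ (ψ.imp χ)) : D Γ ((Fm.or φ ψ).imp (Fm.or φ χ)) :=
  mp' (ax' (LPAxiom.pl4 ψ χ φ)) h

lemma orMonoL (h : D Γ (φ.imp ψ)) : D Γ ((Fm.or φ χ).imp (Fm.or ψ χ)) :=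
  syl (ax' (LPAxiom.pl2 φ χ)) (syl (orMonoR h) (ax' (LPAxiom.pl2 χ ψ)))

lemma orElim (h1 : D Γ (φ.imp χ)) (h2 : D Γ (ψ.imp χ)) : D Γ ((Fm.or φ ψ).imp χ) :=
  syl (orMonoL h1) (syl (orMonoR h2) (ax' (LPAxiom.pl3 χ)))

lemma orInl : D Γ (φ.imp (Fm.or φ ψ)) := ax' (LPAxiom.pl1 φ ψ)

lemma orInr : D Γ (ψ.imp (Fm.or φ ψ)) :=
  syl (ax' (LPAxiom.pl1 ψ φ)) (ax' (LPAxiom.pl2 ψ φ))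

lemma dni : D Γ (φ.imp (Fm.neg (Fm.neg φ))) := perm (id' (φ := Fm.neg φ))

lemma em : D Γ (Fm.or φ (Fm.neg φ)) := perm (id' (φ := φ))

lemma dne : D Γ ((Fm.neg (Fm.neg φ)).imp φ) :=
  perm (mp' (orMonoR (dni (φ := Fm.neg φ))) (em (φ := φ)))

lemma cp1 (h : D Γ (φ.imp ψ)) : D Γ ((Fm.neg ψ).imp (Fm.neg φ)) :=
  perm (syl h (dni (φ := ψ)))

lemma cp2 (h : D Γ ((Fm.neg φ).imp ψ)) : D Γ ((Fm.neg ψ).imp φ) :=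
  syl (cp1 h) (dne (φ := φ))

lemma cp3 (h : D Γ (φ.imp (Fm.neg ψ))) : D Γ (ψ.imp (Fm.neg φ)) :=
  syl (dni (φ := ψ)) (cp1 h)

lemma orAssoc1 : D Γ ((Fm.or (Fm.or φ ψ) χ).imp (Fm.or φ (Fm.or ψ χ))) :=
  orElim (orElim orInl (syl (orInl (φ := ψ) (ψ := χ)) orInr))
    (syl (orInr (ψ := χ) (φ := ψ)) orInr)

lemma orAssoc2 : D Γ ((Fm.or φ (Fm.or ψ χ)).imp (Fm.or (Fm.or φ ψ) χ)) :=
  orElim (syl (orInl (φ := φ) (ψ := ψ)) orInl)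
    (orElim (syl (orInr (φ := φ) (ψ := ψ)) orInl) orInr)

/-- exchange theorem `C` -/
lemma Cthm : D Γ ((φ.imp (ψ.imp χ)).imp (ψ.imp (φ.imp χ))) :=
  syl (orAssoc2 (φ := Fm.neg φ) (ψ := Fm.neg ψ) (χ := χ))
    (syl (orMonoL (ax' (LPAxiom.pl2 (Fm.neg φ) (Fm.neg ψ)))) orAssoc1)

/-- contraction theorem `W` -/
lemma Wthm : D Γ ((φ.imp (φ.imp ψ)).imp (φ.imp ψ)) :=
  syl (orAssoc2 (φ := Fm.neg φ) (ψ := Fm.neg φ) (χ := ψ))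
    (orMonoL (ax' (LPAxiom.pl3 (Fm.neg φ))))

/-- from ⊢x→y infer ⊢(φ→x)→(φ→y) -/
lemma impMonoR (h : D Γ (ψ.imp χ)) : D Γ ((φ.imp ψ).imp (φ.imp χ)) := orMonoR h

lemma mp2 (h1 : D Γ (φ.imp (α.imp β))) (h2 : D Γ (φ.imp α)) : D Γ (φ.imp β) := by
  have s1 : D Γ (φ.imp ((φ.imp α).imp (φ.imp β))) :=
    mp' (impMonoR (ax' (LPAxiom.pl4 α β (Fm.neg φ)))) h1
  have s2 : D Γ ((φ.imp α).imp (φ.imp (φ.imp β))) := mp' Cthm s1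
  exact mp' Wthm (mp' s2 h2)

theorem deduction (h : D (insert φ Γ) ψ) : D Γ (φ.imp ψ) := by
  induction h with
  | ax a => exact mp' K (ax' a)
  | cs hc => exact absurd hc (Set.notMem_empty _)
  | hyp hm =>
    rcases Set.mem_insert_iff.mp hm with h | h
    · subst h; exact id'
    · exact mp' K (Deriv.hyp h)
  | mp _ _ ih1 ih2 => exact mp2 ih1 ih2

lemma negIntro (h : D Γ (φ.imp Fm.bot)) : D Γ (Fm.neg φ) :=
  mp' (ax' (LPAxiom.pl3 (Fm.neg φ))) (syl h (ax' (LPAxiom.pl5 (Fm.neg φ))))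

lemma notBot : D Γ (Fm.neg Fm.bot) := negIntro id'

lemma negJoin (h1 : D Γ (Fm.neg φ)) (h2 : D Γ (Fm.neg ψ)) : D Γ (Fm.neg (Fm.or φ ψ)) := by
  have e1 : D Γ (φ.imp Fm.bot) := mp' (ax' (LPAxiom.pl1 (Fm.neg φ) Fm.bot)) h1
  have e2 : D Γ (ψ.imp Fm.bot) := mp' (ax' (LPAxiom.pl1 (Fm.neg ψ) Fm.bot)) h2
  exact negIntro (orElim e1 e2)

lemma elimHyp {χ : Fm} (h1 : D (insert χ Γ) φ) (h2 : D (insert (Fm.neg χ) Γ) φ) : D Γ φ :=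
  mp' (orElim (deduction h1) (deduction h2)) em

end D
end HLP
namespace HLP

/-! ### Propositional skeletons and Kalmár-style completeness -/

inductive PFm : Type where
  | atom : ℕ → PFm
  | bot : PFm
  | neg : PFm → PFm
  | or : PFm → PFm → PFm

namespace PFm

def imp (p q : PFm) : PFm := .or (.neg p) q
def and (p q : PFm) : PFm := .neg (.or (.neg p) (.neg q))
def iff (p q : PFm) : PFm := (p.imp q).and (q.imp p)

def eval (v : ℕ → Bool) : PFm → Bool
  | atom n => v n
  | bot => false
  | neg p => !(p.eval v)
  | or p q => p.eval v || q.eval v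

def sub (σ : ℕ → Fm) : PFm → Fm
  | atom n => σ n
  | bot => .bot
  | neg p => .neg (p.sub σ)
  | or p q => .or (p.sub σ) (q.sub σ)

def atoms : PFm → List ℕ
  | atom n => [n]
  | bot => []
  | neg p => p.atoms
  | or p q => p.atoms ++ q.atoms

lemma eval_congr {v w : ℕ → Bool} : ∀ p : PFm, (∀ n ∈ p.atoms, v n = w n) →
    p.eval v = p.eval w
  | atom n, h => h n (by simp [atoms])
  | bot, _ => rfl
  | neg p, h => by simp [eval, eval_congr p h]
  | or p q, h => by
      simp only [eval]
      rw [eval_congr p fun n hn => h n (by simp [atoms, hn]),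
        eval_congr q fun n hn => h n (by simp [atoms, hn])]

end PFm

def sign (b : Bool) (φ : Fm) : Fm := if b then φ else φ.neg

def hyps (σ : ℕ → Fm) (v : ℕ → Bool) (l : List ℕ) : Set Fm :=
  { χ | ∃ n ∈ l, χ = sign (v n) (σ n) }

lemma hyps_nil (σ v) : hyps σ v [] = ∅ := by simp [hyps]

lemma hyps_cons (σ v n l) :
    hyps σ v (n :: l) = insert (sign (v n) (σ n)) (hyps σ v l) := by
  ext χ
  constructor
  · rintro ⟨m, hm, rfl⟩
    rcases List.mem_cons.mp hm with h | h
    · subst h; exact Set.mem_insert _ _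
    · exact Set.mem_insert_of_mem _ ⟨m, h, rfl⟩
  · rintro (h | ⟨m, hm, rfl⟩)
    · exact ⟨n, List.mem_cons_self, h⟩
    · exact ⟨m, List.mem_cons_of_mem _ hm, rfl⟩

lemma hyps_congr {σ v w l} (h : ∀ n ∈ l, v n = w n) : hyps σ v l = hyps σ w l := by
  ext χ; constructor <;> rintro ⟨n, hn, rfl⟩ <;> exact ⟨n, hn, by rw [h n hn]⟩

open D in
lemma kalmar (σ : ℕ → Fm) (v : ℕ → Bool) (l : List ℕ) :
    ∀ p : PFm, (∀ n ∈ p.atoms, n ∈ l) →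
      D (hyps σ v l) (sign (p.eval v) (p.sub σ)) := by
  intro p
  induction p with
  | atom n => intro hl; exact Deriv.hyp ⟨n, hl n (by simp [PFm.atoms]), rfl⟩
  | bot => intro _; exact notBot
  | neg p ih =>
    intro hl
    have ihp := ih (fun n hn => hl n (by simpa [PFm.atoms] using hn))
    cases hv : p.eval v with
    | true => rw [hv] at ihp; simpa [PFm.eval, hv, sign, PFm.sub] using mp' dni ihp
    | false => rw [hv] at ihp; simpa [PFm.eval, hv, sign, PFm.sub] using ihp
  | or p q ihp ihq =>
    intro hl
    have hp := ihp (fun n hn => hl n (by simp [PFm.atoms, hn]))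
    have hq := ihq (fun n hn => hl n (by simp [PFm.atoms, hn]))
    cases hvp : p.eval v with
    | true =>
      rw [hvp] at hp
      simpa [PFm.eval, hvp, sign, PFm.sub] using mp' orInl hp
    | false =>
      rw [hvp] at hp
      cases hvq : q.eval v with
      | true =>
        rw [hvq] at hq
        simpa [PFm.eval, hvp, hvq, sign, PFm.sub] using mp' orInr hq
      | false =>
        rw [hvq] at hq
        simp only [sign] at hp hq
        simpa [PFm.eval, hvp, hvq, sign, PFm.sub] using negJoin hp hq

lemma elimList (σ : ℕ → Fm) (F : Fm) :
    ∀ l : List ℕ, l.Nodup → (∀ v, D (hyps σ v l) F) → D ∅ F := by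
  intro l
  induction l with
  | nil =>
    intro _ h
    have := h (fun _ => true); rwa [hyps_nil] at this
  | cons n l ih =>
    intro hnd h
    refine ih hnd.of_cons fun v => ?_
    refine D.elimHyp (χ := σ n) ?_ ?_
    · have := h (Function.update v n true)
      rw [hyps_cons, Function.update_self,
        hyps_congr (w := v) (fun m hm => Function.update_of_ne
          (fun he => (List.nodup_cons.mp hnd).1 (by subst he; exact hm)) _ _)] at this
      simpa [sign] using this
    · have := h (Function.update v n false)
      rw [hyps_cons, Function.update_self,
        hyps_congr (w := v) (fun m hm => Function.update_of_ne
          (fun he => (List.nodup_cons.mp hnd).1 (by subst he; exact hm)) _ _)] at this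
      simpa [sign] using this

lemma bridge {φ : Fm} (h : D ∅ φ) : HDeriv φ := by
  induction h with
  | ax a => exact HDeriv.ax a
  | cs hc => exact absurd hc (Set.notMem_empty _)
  | hyp hm => exact absurd hm (Set.notMem_empty _)
  | mp _ _ ih1 ih2 => exact HDeriv.mp ih1 ih2

theorem taut {p : PFm} (hp : ∀ v, p.eval v = true) (σ : ℕ → Fm) : HDeriv (p.sub σ) := by
  refine bridge (elimList σ _ p.atoms.dedup p.atoms.nodup_dedup fun v => ?_)
  have := kalmar σ v p.atoms.dedup p (fun n hn => List.mem_dedup.mpr hn)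
  rwa [hp v, sign] at this

def v4 (a b c d : Bool) : ℕ → Bool :=
  fun n => if n = 0 then a else if n = 1 then b else if n = 2 then c else d

/-- Establish a tautology scheme by finite boolean checking (atoms among 0,1,2,3). -/
theorem taut4 {p : PFm} (hat : p.atoms.all (fun n => decide (n < 4)) = true)
    (h : ∀ a b c d : Bool, p.eval (v4 a b c d) = true) (σ : ℕ → Fm) :
    HDeriv (p.sub σ) := by
  refine taut (fun v => ?_) σ
  rw [PFm.eval_congr p (w := v4 (v 0) (v 1) (v 2) (v 3))
    (fun n hn => ?_)]
  · exact h _ _ _ _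
  · have : n < 4 := of_decide_eq_true (List.all_eq_true.mp hat n hn)
    interval_cases n <;> rfl

end HLP
namespace HLP

/-! ### The Lindenbaum–Tarski algebra of HLP_∅ -/

def pa : PFm := .atom 0
def pb : PFm := .atom 1
def pc : PFm := .atom 2

def σ4 (φ ψ χ ω : Fm) : ℕ → Fm :=
  fun n => if n = 0 then φ else if n = 1 then ψ else if n = 2 then χ else ω

/-- Convenient form of the tautology theorem. -/
lemma T4 (p : PFm) (σ : ℕ → Fm) (hat : p.atoms.all (fun n => decide (n < 4)) = true)
    (h : ∀ a b c d : Bool, p.eval (v4 a b c d) = true) : HDeriv (p.sub σ) :=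
  taut4 hat h σ

def r (φ ψ : Fm) : Prop := HDeriv (φ.iff ψ)

lemma r.refl (φ : Fm) : r φ φ :=
  T4 (pa.iff pa) (σ4 φ φ φ φ) (by decide) (by decide)

lemma r.symm {φ ψ : Fm} (h : r φ ψ) : r ψ φ :=
  HDeriv.mp (T4 ((pa.iff pb).imp (pb.iff pa)) (σ4 φ ψ ψ ψ) (by decide) (by decide)) h

lemma r.trans {φ ψ χ : Fm} (h1 : r φ ψ) (h2 : r ψ χ) : r φ χ :=
  HDeriv.mp (HDeriv.mp
    (T4 ((pa.iff pb).imp ((pb.iff pc).imp (pa.iff pc))) (σ4 φ ψ χ χ)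
      (by decide) (by decide)) h1) h2

instance setoidFm : Setoid Fm := ⟨r, fun φ => r.refl φ, r.symm, r.trans⟩

abbrev LA : Type := Quotient setoidFm

def mkf (φ : Fm) : LA := Quotient.mk setoidFm φ

lemma negCong {φ ψ : Fm} (h : r φ ψ) : r φ.neg ψ.neg :=
  HDeriv.mp (T4 ((pa.iff pb).imp (pa.neg.iff pb.neg)) (σ4 φ ψ ψ ψ)
    (by decide) (by decide)) h

lemma orCong {φ₁ ψ₁ φ₂ ψ₂ : Fm} (h1 : r φ₁ ψ₁) (h2 : r φ₂ ψ₂) :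
    r (φ₁.or φ₂) (ψ₁.or ψ₂) :=
  HDeriv.mp (HDeriv.mp
    (T4 ((pa.iff pb).imp ((pc.iff (PFm.atom 3)).imp
        ((pa.or pc).iff (pb.or (PFm.atom 3))))) (σ4 φ₁ ψ₁ φ₂ ψ₂)
      (by decide) (by decide)) h1) h2

lemma andCong {φ₁ ψ₁ φ₂ ψ₂ : Fm} (h1 : r φ₁ ψ₁) (h2 : r φ₂ ψ₂) :
    r (φ₁.and φ₂) (ψ₁.and ψ₂) :=
  HDeriv.mp (HDeriv.mp
    (T4 ((pa.iff pb).imp ((pc.iff (PFm.atom 3)).imp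
        ((pa.and pc).iff (pb.and (PFm.atom 3))))) (σ4 φ₁ ψ₁ φ₂ ψ₂)
      (by decide) (by decide)) h1) h2

def negQ : LA → LA := Quotient.map Fm.neg fun _ _ h => negCong h
def orQ : LA → LA → LA := Quotient.map₂ Fm.or fun _ _ h1 _ _ h2 => orCong h1 h2
def andQ : LA → LA → LA := Quotient.map₂ Fm.and fun _ _ h1 _ _ h2 => andCong h1 h2
def boxQ (t : Tm) : LA → LA := Quotient.map (Fm.box t) fun _ _ h => HDeriv.jreg t h

instance : Max LA := ⟨orQ⟩
instance : Min LA := ⟨andQ⟩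

instance instLatticeLA : Lattice LA :=
  Lattice.mk'
    (fun a b => Quotient.inductionOn₂ a b fun φ ψ => Quotient.sound
      (T4 ((pa.or pb).iff (pb.or pa)) (σ4 φ ψ ψ ψ) (by decide) (by decide)))
    (fun a b c => Quotient.inductionOn₃ a b c fun φ ψ χ => Quotient.sound
      (T4 (((pa.or pb).or pc).iff (pa.or (pb.or pc))) (σ4 φ ψ χ χ)
        (by decide) (by decide)))
    (fun a b => Quotient.inductionOn₂ a b fun φ ψ => Quotient.sound
      (T4 ((pa.and pb).iff (pb.and pa)) (σ4 φ ψ ψ ψ) (by decide) (by decide)))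
    (fun a b c => Quotient.inductionOn₃ a b c fun φ ψ χ => Quotient.sound
      (T4 (((pa.and pb).and pc).iff (pa.and (pb.and pc))) (σ4 φ ψ χ χ)
        (by decide) (by decide)))
    (fun a b => Quotient.inductionOn₂ a b fun φ ψ => Quotient.sound
      (T4 ((pa.or (pa.and pb)).iff pa) (σ4 φ ψ ψ ψ) (by decide) (by decide)))
    (fun a b => Quotient.inductionOn₂ a b fun φ ψ => Quotient.sound
      (T4 ((pa.and (pa.or pb)).iff pa) (σ4 φ ψ ψ ψ) (by decide) (by decide)))

lemma le_mkf {φ ψ : Fm} : mkf φ ≤ mkf ψ ↔ HDeriv (φ.imp ψ) := by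
  rw [← sup_eq_right]
  constructor
  · intro h
    exact HDeriv.mp (T4 (((pa.or pb).iff pb).imp (pa.imp pb)) (σ4 φ ψ ψ ψ)
      (by decide) (by decide)) (Quotient.exact h)
  · intro h
    exact Quotient.sound (HDeriv.mp
      (T4 ((pa.imp pb).imp ((pa.or pb).iff pb)) (σ4 φ ψ ψ ψ)
        (by decide) (by decide)) h)

instance instDistribLatticeLA : DistribLattice LA :=
  DistribLattice.ofInfSupLe fun a b c => Quotient.inductionOn₃ a b c fun φ ψ χ =>
    le_mkf.mpr (T4 ((pa.and (pb.or pc)).imp ((pa.and pb).or (pa.and pc)))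
      (σ4 φ ψ χ χ) (by decide) (by decide))

instance instBooleanAlgebraLA : BooleanAlgebra LA where
  __ := instDistribLatticeLA
  compl := negQ
  top := mkf Fm.top
  bot := mkf Fm.bot
  inf_compl_le_bot a := Quotient.inductionOn a fun φ =>
    le_mkf.mpr (T4 ((pa.and pa.neg).imp PFm.bot) (σ4 φ φ φ φ) (by decide) (by decide))
  top_le_sup_compl a := Quotient.inductionOn a fun φ =>
    le_mkf.mpr (T4 ((PFm.bot.neg).imp (pa.or pa.neg)) (σ4 φ φ φ φ) (by decide) (by decide))
  le_top a := Quotient.inductionOn a fun φ =>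
    le_mkf.mpr (T4 (pa.imp PFm.bot.neg) (σ4 φ φ φ φ) (by decide) (by decide))
  bot_le a := Quotient.inductionOn a fun φ =>
    le_mkf.mpr (T4 (PFm.bot.imp pa) (σ4 φ φ φ φ) (by decide) (by decide))

lemma uncurry' {x y z : Fm} (h : HDeriv (x.imp (y.imp z))) : HDeriv ((x.and y).imp z) :=
  HDeriv.mp (T4 ((pa.imp (pb.imp pc)).imp ((pa.and pb).imp pc)) (σ4 x y z z)
    (by decide) (by decide)) h

lemma isHLPAlgLA : IsHLPAlg (A := LA) boxQ where
  appl s t a b := Quotient.inductionOn₂ a b fun φ ψ => by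
    have h1 : (mkf φ ⇨ mkf ψ) = mkf (φ.imp ψ) := by
      rw [himp_eq]
      exact Quotient.sound (T4 ((pb.or pa.neg).iff (pa.imp pb)) (σ4 φ ψ ψ ψ)
        (by decide) (by decide))
    show boxQ s (mkf φ ⇨ mkf ψ) ⊓ boxQ t (mkf φ) ≤ boxQ (.app s t) (mkf ψ)
    rw [h1]
    exact le_mkf.mpr (uncurry' (HDeriv.ax (LPAxiom.appl s t φ ψ)))
  sum s t a := Quotient.inductionOn a fun φ =>
    le_mkf.mpr (HDeriv.ax (LPAxiom.sum s t φ))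
  jT t a := Quotient.inductionOn a fun φ =>
    le_mkf.mpr (HDeriv.ax (LPAxiom.jT t φ))
  j4 t a := Quotient.inductionOn a fun φ =>
    le_mkf.mpr (HDeriv.ax (LPAxiom.j4 t φ))

lemma eval_mkf : ∀ ψ : Fm, evalBox boxQ (fun p => mkf (.prop p)) ψ = mkf ψ
  | .prop _ => rfl
  | .bot => rfl
  | .neg φ => by
      show (evalBox boxQ _ φ)ᶜ = _
      rw [eval_mkf φ]; rfl
  | .or φ ψ => by
      show evalBox boxQ _ φ ⊔ evalBox boxQ _ ψ = _
      rw [eval_mkf φ, eval_mkf ψ]; rfl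
  | .box t φ => by
      show boxQ t (evalBox boxQ _ φ) = _
      rw [eval_mkf φ]; rfl

theorem completeness {φ : Fm} (h : HLPValid φ) : HDeriv φ := by
  have hv := h LA boxQ isHLPAlgLA fun p => mkf (.prop p)
  rw [eval_mkf] at hv
  have hr : r φ Fm.top := Quotient.exact hv
  exact HDeriv.mp (T4 ((pa.iff PFm.bot.neg).imp pa) (σ4 φ φ φ φ)
    (by decide) (by decide)) hr

end HLP
namespace HLP

/-! ### Soundness -/

section Soundness

variable {A : Type} [BooleanAlgebra A] (box : Tm → A → A) (θ : ℕ → A)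

lemma sup_compl_eq_top {a b : A} (h : a ≤ b) : aᶜ ⊔ b = ⊤ := by
  rw [sup_comm, ← himp_eq, himp_eq_top_iff]; exact h

lemma le_of_sup_compl {a b : A} (h : aᶜ ⊔ b = ⊤) : a ≤ b := by
  rw [← himp_eq_top_iff, himp_eq, sup_comm]; exact h

lemma comple (x y : A) : xᶜ ⊔ y = x ⇨ y := by rw [himp_eq, sup_comm]

lemma sound_ax {φ : Fm} (h : LPAxiom φ) (hbox : IsHLPAlg box) :
    evalBox box θ φ = ⊤ := by
  cases h with
  | pl1 φ ψ =>
    simp only [Fm.imp, evalBox]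
    exact sup_compl_eq_top le_sup_left
  | pl2 φ ψ =>
    simp only [Fm.imp, evalBox]
    exact sup_compl_eq_top (sup_le le_sup_right le_sup_left)
  | pl3 φ =>
    simp only [Fm.imp, evalBox]
    exact sup_compl_eq_top (sup_le le_rfl le_rfl)
  | pl4 φ ψ χ =>
    simp only [Fm.imp, evalBox]
    rw [comple, comple, comple, himp_eq_top_iff, le_himp_iff, inf_sup_left]
    exact sup_le (inf_le_right.trans le_sup_left) (himp_inf_le.trans le_sup_right)
  | pl5 φ =>
    simp only [Fm.imp, evalBox]
    exact sup_compl_eq_top bot_le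
  | appl s t φ ψ =>
    simp only [Fm.imp, evalBox]
    rw [comple (evalBox box θ φ) (evalBox box θ ψ),
      comple (box t (evalBox box θ φ)) _, comple, himp_eq_top_iff, le_himp_iff]
    exact hbox.appl s t _ _
  | sum s t φ =>
    simp only [Fm.imp, evalBox]
    exact sup_compl_eq_top (hbox.sum s t _)
  | jT t φ =>
    simp only [Fm.imp, evalBox]
    exact sup_compl_eq_top (hbox.jT t _)
  | j4 t φ =>
    simp only [Fm.imp, evalBox]
    exact sup_compl_eq_top (hbox.j4 t _)

end Soundness

theorem soundness {φ : Fm} (h : HDeriv φ) : HLPValid φ := by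
  induction h with
  | ax a =>
    intro A _ box hbox θ
    exact sound_ax box θ a hbox
  | mp h1 h2 ih1 ih2 =>
    intro A _ box hbox θ
    have e1 := ih1 A box hbox θ
    have e2 := ih2 A box hbox θ
    simp only [Fm.imp, evalBox] at e1
    have hle := le_of_sup_compl e1
    rw [e2] at hle
    exact top_le_iff.mp hle
  | jreg t h0 ih =>
    intro A _ box hbox θ
    have e := ih A box hbox θ
    simp only [Fm.iff, Fm.and, Fm.imp, evalBox] at e
    rw [compl_eq_top, sup_eq_bot_iff, compl_eq_bot, compl_eq_bot] at e
    have hab := le_antisymm (le_of_sup_compl e.1) (le_of_sup_compl e.2)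
    simp only [Fm.iff, Fm.and, Fm.imp, evalBox]
    rw [hab]
    simp

end HLP

/-- **Soundness and completeness of HLP_∅** with respect to HLP_∅ algebras with
singleton set of distinguished elements {1}. -/

theorem HLP_soundness_completeness : ∀ φ : Fm, HDeriv φ ↔ HLPValid φ :=
  fun _ => ⟨HLP.soundness, HLP.completeness⟩
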